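/- Let k > 2 be an integer. If Q is a real polynomial of degree 2 that is extremal for (2, {1,2,...,k}), then the leading coefficient of Q equals 8/(k−1)^2 when k is odd, and equals 8/(k(k−2)) when k is even. -/

import Mathlib

open Polynomial

/-- `Q` is extremal for `(d, {1, 2, ..., k})`: it has degree `d`, is bounded in absolute
value by `1` at the integer points `1, ..., k`, and its leading coefficient is maximal among
all degree `d` polynomials bounded in absolute value by `1` at these points. -/
def IsExtremalOnRange (d k : ℕ) (Q : Polynomial ℝ) : Prop :=
  Q.natDegree = d ∧ (∀ j : ℕ, 1 ≤ j → j ≤ k → |Q.eval (j : ℝ)| ≤ 1) ∧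
    ∀ R : Polynomial ℝ, R.natDegree = d → (∀ j : ℕ, 1 ≤ j → j ≤ k → |R.eval (j : ℝ)| ≤ 1) →
      R.leadingCoeff ≤ Q.leadingCoeff

lemma div_diff_bound (k m : ℕ) (hm1 : 1 < m) (hmk : m < k)
    (Q : Polynomial ℝ) (hd : Q.natDegree = 2)
    (hb : ∀ j : ℕ, 1 ≤ j → j ≤ k → |Q.eval (j : ℝ)| ≤ 1) :
    Q.leadingCoeff ≤ 1 / (((m:ℝ) - 1) * ((k:ℝ) - 1)) + 1 / (((m:ℝ) - 1) * ((k:ℝ) - m))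
      + 1 / (((k:ℝ) - 1) * ((k:ℝ) - m)) := by
  have hM : (1:ℝ) < (m:ℝ) := by exact_mod_cast hm1
  have hK : (m:ℝ) < (k:ℝ) := by exact_mod_cast hmk
  have hev : ∀ x : ℝ, Q.eval x = Q.coeff 0 + Q.coeff 1 * x + Q.coeff 2 * x ^ 2 := by
    intro x
    rw [Polynomial.eval_eq_sum_range, hd]
    simp [Finset.sum_range_succ]
  have e1 := hb 1 le_rfl (by omega)
  have e2 := hb m (by omega) (by omega)
  have e3 := hb k (by omega) le_rfl
  rw [Nat.cast_one] at e1
  have hlc : Q.leadingCoeff = Q.coeff 2 := by rw [Polynomial.leadingCoeff, hd]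
  have d1 : (0:ℝ) < ((m:ℝ) - 1) * ((k:ℝ) - 1) := by nlinarith
  have d2 : (0:ℝ) < ((m:ℝ) - 1) * ((k:ℝ) - (m:ℝ)) := by nlinarith
  have d3 : (0:ℝ) < ((k:ℝ) - 1) * ((k:ℝ) - (m:ℝ)) := by nlinarith
  have key : Q.coeff 2 = Q.eval 1 / (((m:ℝ) - 1) * ((k:ℝ) - 1))
      - Q.eval (m:ℝ) / (((m:ℝ) - 1) * ((k:ℝ) - (m:ℝ)))
      + Q.eval (k:ℝ) / (((k:ℝ) - 1) * ((k:ℝ) - (m:ℝ))) := by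
    rw [hev 1, hev (m:ℝ), hev (k:ℝ)]
    have f1 : (m:ℝ) - 1 ≠ 0 := by linarith
    have f2 : (k:ℝ) - 1 ≠ 0 := by linarith
    have f3 : (k:ℝ) - (m:ℝ) ≠ 0 := by linarith
    field_simp
    ring
  rw [hlc, key]
  have a1 := abs_le.mp e1
  have a2 := abs_le.mp e2
  have a3 := abs_le.mp e3
  have h1 : Q.eval 1 / (((m:ℝ) - 1) * ((k:ℝ) - 1)) ≤ 1 / (((m:ℝ) - 1) * ((k:ℝ) - 1)) :=
    (div_le_div_iff_of_pos_right d1).mpr a1.2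
  have h2 : -Q.eval (m:ℝ) / (((m:ℝ) - 1) * ((k:ℝ) - (m:ℝ)))
      ≤ 1 / (((m:ℝ) - 1) * ((k:ℝ) - (m:ℝ))) :=
    (div_le_div_iff_of_pos_right d2).mpr (by linarith [a2.1])
  have h3 : Q.eval (k:ℝ) / (((k:ℝ) - 1) * ((k:ℝ) - (m:ℝ)))
      ≤ 1 / (((k:ℝ) - 1) * ((k:ℝ) - (m:ℝ))) :=
    (div_le_div_iff_of_pos_right d3).mpr a3.2
  rw [neg_div] at h2
  linarith

lemma exists_quad (k : ℕ) (a e : ℝ) (ha : a ≠ 0)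
    (hval : ∀ j : ℕ, 1 ≤ j → j ≤ k → |a * ((j:ℝ) - ((k:ℝ) + 1) / 2) ^ 2 + e| ≤ 1) :
    ∃ R : Polynomial ℝ, R.natDegree = 2 ∧ (∀ j : ℕ, 1 ≤ j → j ≤ k → |R.eval (j:ℝ)| ≤ 1)
      ∧ R.leadingCoeff = a := by
  refine ⟨C a * X ^ 2 + C (-(a * ((k:ℝ) + 1))) * X + C (a * (((k:ℝ) + 1) / 2) ^ 2 + e),
    natDegree_quadratic ha, ?_, leadingCoeff_quadratic ha⟩
  intro j hj1 hjk
  have : (C a * X ^ 2 + C (-(a * ((k:ℝ) + 1))) * X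
      + C (a * (((k:ℝ) + 1) / 2) ^ 2 + e)).eval (j:ℝ)
      = a * ((j:ℝ) - ((k:ℝ) + 1) / 2) ^ 2 + e := by
    simp; ring
  rw [this]
  exact hval j hj1 hjk

lemma odd_val (k j : ℕ) (hk : 2 < k) (hj1 : 1 ≤ j) (hjk : j ≤ k) :
    |8 / ((k:ℝ) - 1) ^ 2 * ((j:ℝ) - ((k:ℝ) + 1) / 2) ^ 2 + (-1)| ≤ 1 := by
  have hK : (2:ℝ) < (k:ℝ) := by exact_mod_cast hk
  have hx1 : (1:ℝ) ≤ (j:ℝ) := by exact_mod_cast hj1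
  have hxk : (j:ℝ) ≤ (k:ℝ) := by exact_mod_cast hjk
  have hd : (0:ℝ) < ((k:ℝ) - 1) ^ 2 := by nlinarith
  have hsq : ((j:ℝ) - ((k:ℝ) + 1) / 2) ^ 2 ≤ ((k:ℝ) - 1) ^ 2 / 4 := by
    nlinarith [mul_nonneg (sub_nonneg.mpr hx1) (sub_nonneg.mpr hxk)]
  rw [abs_le]
  constructor
  · have : 0 ≤ 8 / ((k:ℝ) - 1) ^ 2 * ((j:ℝ) - ((k:ℝ) + 1) / 2) ^ 2 := by positivity
    linarith
  · have h8 : 8 / ((k:ℝ) - 1) ^ 2 * ((j:ℝ) - ((k:ℝ) + 1) / 2) ^ 2 ≤ 2 := by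
      rw [div_mul_eq_mul_div, div_le_iff₀ hd]; nlinarith
    linarith

lemma even_val (k j t : ℕ) (hk : 2 < k) (hkt : k = 2 * t) (hj1 : 1 ≤ j) (hjk : j ≤ k) :
    |8 / ((k:ℝ) * ((k:ℝ) - 2)) * ((j:ℝ) - ((k:ℝ) + 1) / 2) ^ 2
      + (-1 - 8 / ((k:ℝ) * ((k:ℝ) - 2)) / 4)| ≤ 1 := by
  have hK : (2:ℝ) < (k:ℝ) := by exact_mod_cast hk
  have hx1 : (1:ℝ) ≤ (j:ℝ) := by exact_mod_cast hj1
  have hxk : (j:ℝ) ≤ (k:ℝ) := by exact_mod_cast hjk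
  have hd : (0:ℝ) < (k:ℝ) * ((k:ℝ) - 2) := by nlinarith
  set a : ℝ := 8 / ((k:ℝ) * ((k:ℝ) - 2)) with ha
  have hap : 0 < a := by positivity
  have hak : a * ((k:ℝ) * ((k:ℝ) - 2)) = 8 := by
    rw [ha]; exact div_mul_cancel₀ 8 hd.ne'
  have hsq : ((j:ℝ) - ((k:ℝ) + 1) / 2) ^ 2 ≤ ((k:ℝ) - 1) ^ 2 / 4 := by
    nlinarith [mul_nonneg (sub_nonneg.mpr hx1) (sub_nonneg.mpr hxk)]
  have hquarter : (1:ℝ) / 4 ≤ ((j:ℝ) - ((k:ℝ) + 1) / 2) ^ 2 := by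
    set n : ℤ := 2 * (j:ℤ) - 2 * (t:ℤ) - 1 with hn
    have hne : n ≠ 0 := by omega
    have h1 : 1 ≤ |n| := Int.one_le_abs hne
    have h2 : (1:ℤ) ≤ n ^ 2 := by nlinarith [sq_abs n]
    have h2r : (1:ℝ) ≤ (n:ℝ) ^ 2 := by exact_mod_cast h2
    have hcast : (j:ℝ) - ((k:ℝ) + 1) / 2 = (n:ℝ) / 2 := by
      subst hkt; simp only [hn]; push_cast; ring
    rw [hcast]
    nlinarith
  rw [abs_le]
  constructor
  · nlinarith
  · nlinarith

theorem stmt_15 (k : ℕ) (hk : 2 < k) (Q : Polynomial ℝ) (hQ : IsExtremalOnRange 2 k Q) :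
    (Odd k → Q.leadingCoeff = 8 / ((k : ℝ) - 1) ^ 2) ∧
    (Even k → Q.leadingCoeff = 8 / ((k : ℝ) * ((k : ℝ) - 2))) := by
  obtain ⟨hd, hb, hmax⟩ := hQ
  have hK : (2:ℝ) < (k:ℝ) := by exact_mod_cast hk
  constructor
  · intro hodd
    obtain ⟨t, ht⟩ := hodd
    have ht1 : 1 ≤ t := by omega
    have htr : (1:ℝ) ≤ (t:ℝ) := by exact_mod_cast ht1
    have hkr : (k:ℝ) = 2 * (t:ℝ) + 1 := by rw [ht]; push_cast; ring
    apply le_antisymm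
    · have hub := div_diff_bound k (t + 1) (by omega) (by omega) Q hd hb
      have hm : ((t + 1 : ℕ) : ℝ) = (t:ℝ) + 1 := by push_cast; ring
      rw [hm, hkr] at hub
      rw [hkr]
      have h1 : (0:ℝ) < (t:ℝ) := by linarith
      have e1 : ((t:ℝ) + 1 - 1 : ℝ) = (t:ℝ) := by ring
      have e2 : (2 * (t:ℝ) + 1 - 1 : ℝ) = 2 * (t:ℝ) := by ring
      have e3 : (2 * (t:ℝ) + 1 - ((t:ℝ) + 1) : ℝ) = (t:ℝ) := by ring
      rw [e1, e2, e3] at hub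
      have ht0 : (t:ℝ) ≠ 0 := by linarith
      calc Q.leadingCoeff ≤ _ := hub
        _ = 8 / (2 * (t:ℝ) + 1 - 1) ^ 2 := by rw [e2]; field_simp; ring
    · have hk1 : ((k:ℝ) - 1) ≠ 0 := by intro h; linarith
      have ha : (8:ℝ) / ((k:ℝ) - 1) ^ 2 ≠ 0 := by positivity
      obtain ⟨R, hR1, hR2, hR3⟩ := exists_quad k (8 / ((k:ℝ) - 1) ^ 2) (-1) ha
        (fun j hj1 hjk => odd_val k j hk hj1 hjk)
      rw [← hR3]
      exact hmax R hR1 hR2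
  · intro heven
    obtain ⟨t, ht⟩ := heven
    have hkt : k = 2 * t := by omega
    have ht2 : 2 ≤ t := by omega
    have htr : (2:ℝ) ≤ (t:ℝ) := by exact_mod_cast ht2
    have hkr : (k:ℝ) = 2 * (t:ℝ) := by rw [hkt]; push_cast; ring
    apply le_antisymm
    · have hub := div_diff_bound k t (by omega) (by omega) Q hd hb
      rw [hkr] at hub
      rw [hkr]
      have h1 : (0:ℝ) < (t:ℝ) - 1 := by linarith
      have h2 : (0:ℝ) < 2 * (t:ℝ) - 1 := by linarith
      have h3 : (0:ℝ) < (t:ℝ) := by linarith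
      have e3 : (2 * (t:ℝ) - (t:ℝ) : ℝ) = (t:ℝ) := by ring
      rw [e3] at hub
      have n1 : ((t:ℝ) - 1 : ℝ) ≠ 0 := h1.ne'
      have n2 : (2 * (t:ℝ) - 1 : ℝ) ≠ 0 := h2.ne'
      have n3 : (t:ℝ) ≠ 0 := h3.ne'
      have n4 : (2 * (t:ℝ) - 2 : ℝ) ≠ 0 := by intro h; apply n1; linarith
      calc Q.leadingCoeff ≤ _ := hub
        _ = 8 / (2 * (t:ℝ) * (2 * (t:ℝ) - 2)) := by
          rw [div_add_div _ _ (mul_ne_zero n1 n2) (mul_ne_zero n1 n3),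
            div_add_div _ _ (mul_ne_zero (mul_ne_zero n1 n2) (mul_ne_zero n1 n3)) (mul_ne_zero n2 n3),
            div_eq_div_iff (mul_ne_zero (mul_ne_zero (mul_ne_zero n1 n2) (mul_ne_zero n1 n3)) (mul_ne_zero n2 n3))
              (mul_ne_zero (mul_ne_zero two_ne_zero n3) n4)]
          ring
    · have hd0 : (0:ℝ) < (k:ℝ) * ((k:ℝ) - 2) := by nlinarith
      have ha : (8:ℝ) / ((k:ℝ) * ((k:ℝ) - 2)) ≠ 0 := by positivity
      obtain ⟨R, hR1, hR2, hR3⟩ := exists_quad k (8 / ((k:ℝ) * ((k:ℝ) - 2)))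
        (-1 - 8 / ((k:ℝ) * ((k:ℝ) - 2)) / 4) ha
        (fun j hj1 hjk => even_val k j t hk hkt hj1 hjk)
      rw [← hR3]
      exact hmax R hR1 hR2
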